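/- Let X be a finite set, x ∈ D ⊆ X, and let (D_i, x_i)_{i=1}^n be a sequence enumerating, for each pair (F, x) with x ∈ F ⊆ X, exactly (1 − a_{(D,x)}(F,x)) copies, where a_{(D,x)}(F,y) = −1 if y = x and |F∖D| is even, +1 if y = x and |F∖D| is odd, and 0 otherwise (and the pair appears once if a = 0). Then for every stochastic choice function ρ (with Σ_{y∈F} ρ(F,y) = 1 for all nonempty F), the McFadden–Richter polynomial R((D_i,x_i)_{i=1}^n, ρ) = max_{≻∈ℒ} Σ_i 1{x_i ≻ D_i∖x_i} − Σ_i ρ(D_i, x_i) equals K(ρ, D, x). In particular, K(ρ, D, x) ≥ 0 if and only if R((D_i,x_i)_{i=1}^n, ρ) ≥ 0. -/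

import Mathlib

open Finset

variable {α : Type*} [Fintype α] [DecidableEq α]

/-- A strict linear order (ranking) on the finite set `α`. -/
def Ranking (α : Type*) [Fintype α] [DecidableEq α] : Type _ :=
  {r : α → α → Bool //
    (∀ x, ¬ r x x) ∧ (∀ x y z, r x y → r y z → r x z) ∧
    (∀ x y, x ≠ y → r x y ∨ r y x)}

instance : Fintype (Ranking α) := Subtype.fintype _

/-- The Block–Marschak polynomial `K(ρ, D, x) = ∑_{E ⊇ D} (-1)^{|E \ D|} ρ(E, x)`. -/
noncomputable def bmK (ρ : Finset α → α → ℝ) (D : Finset α) (x : α) : ℝ :=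
  ∑ E : Finset α, if D ⊆ E then (-1 : ℝ) ^ (E \ D).card * ρ E x else 0

/-- The coefficient `a_{(D,x)}(F,y)`: supported on pairs `(F, x)` with `F ⊇ D`,
with sign given by the parity of `|F ∖ D|`. -/
noncomputable def mrA (D : Finset α) (x : α) (F : Finset α) (y : α) : ℝ :=
  if y = x ∧ D ⊆ F then (if (F \ D).card % 2 = 0 then 1 else -1) else 0

/-- The multiplicity `1 − a_{(D,x)}(F,y)` of the pair `(F,y)` in the sequence. -/
noncomputable def mrCount (D : Finset α) (x : α) (F : Finset α) (y : α) : ℝ :=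
  1 - mrA D x F y

/-- `1{y ≻ F∖y}` for the ranking `p`. -/
noncomputable def topInd (p : Ranking α) (F : Finset α) (y : α) : ℝ :=
  if ∀ z ∈ F, z ≠ y → p.1 y z then 1 else 0

/-- reverse ranking -/
def revR (p : Ranking α) : Ranking α :=
  ⟨fun a b => p.1 b a,
   fun x h => p.2.1 x h,
   fun x y z h1 h2 => p.2.2.1 z y x h2 h1,
   fun x y h => (p.2.2.2 x y h).symm⟩

def rankLO (p : Ranking α) : LinearOrder α where
  le a b := a = b ∨ p.1 a b = true
  le_refl a := Or.inl rfl
  le_trans a b c hab hbc := by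
    rcases hab with rfl | hab
    · exact hbc
    rcases hbc with rfl | hbc
    · exact Or.inr hab
    · exact Or.inr (p.2.2.1 a b c hab hbc)
  le_antisymm a b hab hba := by
    rcases hab with rfl | hab
    · rfl
    rcases hba with rfl | hba
    · rfl
    · exact absurd (p.2.2.1 a b a hab hba) (p.2.1 a)
  le_total a b := by
    by_cases h : a = b
    · exact Or.inl (Or.inl h)
    · rcases p.2.2.2 a b h with h' | h'
      · exact Or.inl (Or.inr h')
      · exact Or.inr (Or.inr h')
  toDecidableLE a b := by
    dsimp only; infer_instance

theorem exists_top (p : Ranking α) {F : Finset α} (hF : F.Nonempty) :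
    ∃ m ∈ F, ∀ z ∈ F, z ≠ m → p.1 m z := by
  letI := rankLO p
  obtain ⟨m, hm, hmin⟩ := F.exists_min_image id hF
  refine ⟨m, hm, fun z hz hzm => ?_⟩
  rcases hmin z hz with h | h
  · exact absurd h.symm hzm
  · exact h

theorem topInd_sum (p : Ranking α) {F : Finset α} (hF : F.Nonempty) :
    ∑ y ∈ F, topInd p F y = 1 := by
  obtain ⟨m, hm, htop⟩ := exists_top p hF
  have huniq : ∀ y ∈ F, (∀ z ∈ F, z ≠ y → p.1 y z) → y = m := by
    intro y hy hyt
    by_contra hne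
    exact absurd (p.2.2.1 y m y (hyt m hm (Ne.symm hne)) (htop y hy hne)) (p.2.1 y)
  unfold topInd
  rw [Finset.sum_boole]
  have : F.filter (fun y => ∀ z ∈ F, z ≠ y → p.1 y z) = {m} := by
    ext y
    simp only [mem_filter, mem_singleton]
    constructor
    · rintro ⟨hy, ht⟩; exact huniq y hy ht
    · rintro rfl; exact ⟨hm, htop⟩
  rw [this]
  simp

theorem sign_eq (k : ℕ) : (if k % 2 = 0 then (1:ℝ) else -1) = (-1) ^ k := by
  rcases Nat.even_or_odd k with h | h
  · rw [if_pos (Nat.even_iff.mp h), h.neg_one_pow]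
  · rw [if_neg (by simpa [Nat.odd_iff] using h), h.neg_one_pow]

theorem sum_inner_one (g : Finset α → α → ℝ)
    (h : ∀ F : Finset α, F.Nonempty → ∑ y ∈ F, g F y = 1) :
    ∑ F : Finset α, ∑ y ∈ F, g F y = 2 ^ Fintype.card α - 1 := by
  have : ∀ F : Finset α, ∑ y ∈ F, g F y = 1 - (if F = (∅ : Finset α) then (1:ℝ) else 0) := by
    intro F
    rcases eq_or_ne F ∅ with rfl | hF
    · simp
    · rw [h F (nonempty_iff_ne_empty.mpr hF), if_neg hF]; ring
  rw [Finset.sum_congr rfl (fun F _ => this F), Finset.sum_sub_distrib,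
    Finset.sum_const, Finset.sum_ite_eq' Finset.univ (∅ : Finset α) (fun _ => (1:ℝ))]
  simp [Fintype.card_finset]

theorem mrA_sum (D : Finset α) (x : α) (hx : x ∈ D) (g : Finset α → α → ℝ) :
    ∑ F : Finset α, ∑ y ∈ F, mrA D x F y * g F y
      = ∑ F : Finset α, (if D ⊆ F then (-1:ℝ) ^ (F \ D).card * g F x else 0) := by
  refine Finset.sum_congr rfl fun F _ => ?_
  by_cases hDF : D ⊆ F
  · rw [if_pos hDF]
    rw [Finset.sum_eq_single_of_mem x (hDF hx)]
    · rw [mrA, if_pos ⟨rfl, hDF⟩, sign_eq]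
    · intro y _ hy
      rw [mrA, if_neg (fun hc => hy hc.1), zero_mul]
  · rw [if_neg hDF]
    refine Finset.sum_eq_zero fun y _ => ?_
    rw [mrA, if_neg (fun hc => hDF hc.2), zero_mul]

theorem neg_one_pow_powerset (B : Finset α) :
    ∑ S ∈ B.powerset, (-1:ℝ) ^ S.card = if B = ∅ then 1 else 0 := by
  have h := Finset.sum_powerset_neg_one_pow_card (x := B)
  have : ((∑ S ∈ B.powerset, (-1:ℤ) ^ S.card : ℤ) : ℝ)
      = ∑ S ∈ B.powerset, (-1:ℝ) ^ S.card := by push_cast; rfl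
  rw [← this, h]
  split <;> norm_num

theorem sum_superset (f : Finset α → ℝ) (D : Finset α) :
    ∑ F : Finset α, (if D ⊆ F then f F else 0)
      = ∑ S ∈ (Finset.univ \ D).powerset, f (D ∪ S) := by
  rw [← Finset.sum_filter]
  refine Finset.sum_nbij' (fun F => F \ D) (fun S => D ∪ S) ?_ ?_ ?_ ?_ ?_
  · intro F hF
    simp only [Finset.mem_filter, Finset.mem_univ, true_and] at hF
    exact Finset.mem_powerset.mpr (Finset.sdiff_subset_sdiff (Finset.subset_univ F) le_rfl)
  · intro S hS
    simp only [Finset.mem_filter, Finset.mem_univ, true_and]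
    exact Finset.subset_union_left
  · intro F hF
    simp only [Finset.mem_filter, Finset.mem_univ, true_and] at hF
    exact Finset.union_sdiff_of_subset hF
  · intro S hS
    refine Finset.union_sdiff_cancel_left ?_
    have := Finset.mem_powerset.mp hS
    exact Finset.disjoint_left.mpr fun a haD haS =>
      (Finset.mem_sdiff.mp (this haS)).2 haD
  · intro F hF
    simp only [Finset.mem_filter, Finset.mem_univ, true_and] at hF
    rw [Finset.union_sdiff_of_subset hF]

theorem topInd_union (p : Ranking α) (D S : Finset α) (x : α) (hx : x ∈ D)
    (hS : S ⊆ Finset.univ \ D) :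
    topInd p (D ∪ S) x = topInd p D x * (if ∀ z ∈ S, p.1 x z then 1 else 0) := by
  unfold topInd
  have hiff : (∀ z ∈ D ∪ S, z ≠ x → p.1 x z) ↔
      ((∀ z ∈ D, z ≠ x → p.1 x z) ∧ ∀ z ∈ S, p.1 x z) := by
    constructor
    · intro h
      refine ⟨fun z hz hzx => h z (Finset.mem_union_left _ hz) hzx, fun z hz => ?_⟩
      have hzD : z ∉ D := (Finset.mem_sdiff.mp (hS hz)).2
      exact h z (Finset.mem_union_right _ hz) (fun hc => hzD (hc ▸ hx))
    · rintro ⟨h1, h2⟩ z hz hzx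
      rcases Finset.mem_union.mp hz with h | h
      · exact h1 z h hzx
      · exact h2 z h
  rw [if_congr hiff rfl rfl]
  split_ifs with h1 h2 h3 <;> simp_all

theorem key_top (p : Ranking α) (D : Finset α) (x : α) (hx : x ∈ D) :
    ∑ F : Finset α, (if D ⊆ F then (-1:ℝ) ^ (F \ D).card * topInd p F x else 0)
      = topInd p D x *
        (if (Finset.univ \ D).filter (fun z => p.1 x z = true) = ∅ then 1 else 0) := by
  rw [sum_superset (fun F => (-1:ℝ) ^ (F \ D).card * topInd p F x) D]
  set B := (Finset.univ \ D).filter (fun z => p.1 x z = true) with hB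
  have hBsub : B ⊆ Finset.univ \ D := Finset.filter_subset _ _
  have step : ∀ S ∈ (Finset.univ \ D).powerset,
      (-1:ℝ) ^ ((D ∪ S) \ D).card * topInd p (D ∪ S) x
        = topInd p D x * ((-1:ℝ) ^ S.card * (if S ⊆ B then 1 else 0)) := by
    intro S hS
    have hS' := Finset.mem_powerset.mp hS
    have hdisj : Disjoint D S := Finset.disjoint_left.mpr fun a haD haS =>
      (Finset.mem_sdiff.mp (hS' haS)).2 haD
    rw [Finset.union_sdiff_cancel_left hdisj, topInd_union p D S x hx hS']
    have : (∀ z ∈ S, p.1 x z) ↔ S ⊆ B := by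
      constructor
      · intro h z hz
        exact Finset.mem_filter.mpr ⟨hS' hz, h z hz⟩
      · intro h z hz
        exact (Finset.mem_filter.mp (h hz)).2
    rw [if_congr this rfl rfl]
    ring
  rw [Finset.sum_congr rfl step, ← Finset.mul_sum]
  congr 1
  have : ∀ S ∈ (Finset.univ \ D).powerset,
      (-1:ℝ) ^ S.card * (if S ⊆ B then 1 else 0)
        = if S ⊆ B then (-1:ℝ) ^ S.card else 0 := by
    intro S _; split <;> ring
  rw [Finset.sum_congr rfl this, ← Finset.sum_filter]
  have hfil : ((Finset.univ \ D).powerset).filter (· ⊆ B) = B.powerset := by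
    ext S
    simp only [Finset.mem_filter, Finset.mem_powerset]
    exact ⟨fun h => h.2, fun h => ⟨h.trans hBsub, h⟩⟩
  rw [hfil, neg_one_pow_powerset]

noncomputable def rval (p : Ranking α) (D : Finset α) (x : α) : ℝ :=
  topInd p D x * (if (Finset.univ \ D).filter (fun z => p.1 x z = true) = ∅ then 1 else 0)

theorem rval_nonneg (p : Ranking α) (D : Finset α) (x : α) : 0 ≤ rval p D x := by
  unfold rval topInd
  split_ifs <;> norm_num

theorem exists_rval_zero [Nonempty (Ranking α)] (hcard : 2 ≤ Fintype.card α)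
    (D : Finset α) (x : α) (hx : x ∈ D) :
    ∃ p : Ranking α, rval p D x = 0 := by
  obtain ⟨r⟩ := (inferInstance : Nonempty (Ranking α))
  by_cases h0 : rval r D x = 0
  · exact ⟨r, h0⟩
  have honeA : ∀ z ∈ D, z ≠ x → r.1 x z := by
    by_contra hc
    exact h0 (by unfold rval topInd; rw [if_neg hc, zero_mul])
  have honeB : (Finset.univ \ D).filter (fun z => r.1 x z = true) = ∅ := by
    by_contra hc
    exact h0 (by unfold rval; rw [if_neg hc, mul_zero])
  refine ⟨revR r, ?_⟩
  rcases eq_or_ne (Finset.univ \ D) ∅ with hDc | hDc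
  · -- D = univ; pick z ≠ x in D
    have : Nontrivial α := Fintype.one_lt_card_iff_nontrivial.mp
      (lt_of_lt_of_le one_lt_two hcard)
    obtain ⟨z, hz⟩ := exists_ne x
    have hzD : z ∈ D := by
      by_contra hzD
      exact (Finset.notMem_empty z) (hDc ▸ Finset.mem_sdiff.mpr ⟨Finset.mem_univ z, hzD⟩)
    have hrxz : r.1 x z := honeA z hzD hz
    unfold rval topInd
    rw [if_neg, zero_mul]
    intro hc
    have : (revR r).1 x z := hc z hzD hz
    exact r.2.1 x (r.2.2.1 x z x hrxz this)
  · -- some z outside D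
    obtain ⟨z, hz⟩ := Finset.nonempty_iff_ne_empty.mpr hDc
    have hzD : z ∉ D := (Finset.mem_sdiff.mp hz).2
    have hzx : z ≠ x := fun hc => hzD (hc ▸ hx)
    -- r x z fails, so r z x, so revR r x z holds
    have hnrxz : ¬ r.1 x z := by
      intro hc
      exact (Finset.notMem_empty z) (honeB ▸ Finset.mem_filter.mpr ⟨hz, hc⟩)
    have hrzx : r.1 z x := by
      rcases r.2.2.2 x z (Ne.symm hzx) with h | h
      · exact absurd h hnrxz
      · exact h
    unfold rval
    rw [if_neg, mul_zero]
    intro hc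
    exact (Finset.notMem_empty z) (hc ▸ Finset.mem_filter.mpr ⟨hz, hrzx⟩)

theorem rankSum (p : Ranking α) (D : Finset α) (x : α) (hx : x ∈ D) :
    ∑ F : Finset α, ∑ y ∈ F, mrCount D x F y * topInd p F y
      = (2 ^ Fintype.card α - 1) - rval p D x := by
  have expand : ∀ F : Finset α, ∑ y ∈ F, mrCount D x F y * topInd p F y
      = (∑ y ∈ F, topInd p F y) - ∑ y ∈ F, mrA D x F y * topInd p F y := by
    intro F
    rw [← Finset.sum_sub_distrib]
    refine Finset.sum_congr rfl fun y _ => ?_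
    unfold mrCount; ring
  rw [Finset.sum_congr rfl (fun F _ => expand F), Finset.sum_sub_distrib,
    sum_inner_one (fun F y => topInd p F y) (fun F hF => topInd_sum p hF),
    mrA_sum D x hx (fun F y => topInd p F y), key_top p D x hx]
  rfl

theorem rhoSum (D : Finset α) (x : α) (hx : x ∈ D) (ρ : Finset α → α → ℝ)
    (hρ1 : ∀ F : Finset α, F.Nonempty → ∑ y ∈ F, ρ F y = 1) :
    ∑ F : Finset α, ∑ y ∈ F, mrCount D x F y * ρ F y
      = (2 ^ Fintype.card α - 1) - bmK ρ D x := by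
  have expand : ∀ F : Finset α, ∑ y ∈ F, mrCount D x F y * ρ F y
      = (∑ y ∈ F, ρ F y) - ∑ y ∈ F, mrA D x F y * ρ F y := by
    intro F
    rw [← Finset.sum_sub_distrib]
    refine Finset.sum_congr rfl fun y _ => ?_
    unfold mrCount; ring
  rw [Finset.sum_congr rfl (fun F _ => expand F), Finset.sum_sub_distrib,
    sum_inner_one ρ hρ1, mrA_sum D x hx ρ]
  rfl

theorem sup_eq [Nonempty (Ranking α)] (hcard : 2 ≤ Fintype.card α)
    (D : Finset α) (x : α) (hx : x ∈ D) :
    (⨆ p : Ranking α, ∑ F : Finset α, ∑ y ∈ F, mrCount D x F y * topInd p F y)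
      = 2 ^ Fintype.card α - 1 := by
  apply le_antisymm
  · refine ciSup_le fun p => ?_
    rw [rankSum p D x hx]
    linarith [rval_nonneg p D x]
  · obtain ⟨p0, hp0⟩ := exists_rval_zero hcard D x hx
    have h0 : ∑ F : Finset α, ∑ y ∈ F, mrCount D x F y * topInd p0 F y
        = 2 ^ Fintype.card α - 1 := by
      rw [rankSum p0 D x hx, hp0, sub_zero]
    rw [← h0]
    exact le_ciSup (Set.Finite.bddAbove (Set.finite_range (fun p : Ranking α => ∑ F : Finset α, ∑ y ∈ F, mrCount D x F y * topInd p F y))) p0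

/-- The McFadden–Richter polynomial of the sequence listing each pair `(F,y)`
(`y ∈ F`) with multiplicity `1 − a_{(D,x)}(F,y)` equals the Block–Marschak
polynomial `K(ρ, D, x)`; in particular `K ≥ 0` iff `R ≥ 0`. -/
theorem stmt_14 [Nonempty (Ranking α)] (hcard : 2 ≤ Fintype.card α)
    (D : Finset α) (x : α) (hx : x ∈ D)
    (ρ : Finset α → α → ℝ)
    (hρ1 : ∀ F : Finset α, F.Nonempty → ∑ y ∈ F, ρ F y = 1)
    (R : ℝ)
    (hR : R = (⨆ p : Ranking α, ∑ F : Finset α, ∑ y ∈ F, mrCount D x F y * topInd p F y)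
      - ∑ F : Finset α, ∑ y ∈ F, mrCount D x F y * ρ F y) :
    R = bmK ρ D x ∧ (0 ≤ bmK ρ D x ↔ 0 ≤ R) := by
  have hmain : R = bmK ρ D x := by
    rw [hR, sup_eq hcard D x hx, rhoSum D x hx ρ hρ1]
    ring
  exact ⟨hmain, by rw [hmain]⟩
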